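/- Let p, q be finite types, Φ a real matrix (p × q), Δ a real matrix (q × p), f : p → ℝ, v : p → ℝ, N : ℕ, and τ, γ : ℝ. Suppose (Φ*Δ)^(N+1) = 0, ‖Δ*Φ‖ ≤ τ, and ‖Δ.mulVec v‖∞ ≤ γ. Then I - Φ*Δ is invertible and f ⬝ᵥ ((Φ*Δ*(I - Φ*Δ)⁻¹).mulVec v) ≤ ‖Φᵀ.mulVec f‖₁ * (Σ_{k=0}^{N-1} τ^k) * γ. -/

import Mathlib

open Matrix

attribute [local instance] Matrix.linftyOpNormedAddCommGroup

private lemma mul_pow_aux {p q : Type*} [Fintype p] [Fintype q] [DecidableEq p] [DecidableEq q]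
    (Φ : Matrix p q ℝ) (Δ : Matrix q p ℝ) (k : ℕ) :
    (Φ * Δ) ^ (k + 1) = Φ * ((Δ * Φ) ^ k * Δ) := by
  induction k with
  | zero => simp
  | succ n ih => rw [pow_succ, ih, pow_succ]; simp only [Matrix.mul_assoc]

/-- Inequality (24), the bound on term ② in the proof of Theorem 4: if `(ΦΔ)^(N+1) = 0`,
`‖ΔΦ‖ ≤ τ` (in the `ℓ∞ → ℓ∞` induced norm) and `‖Δ v‖∞ ≤ γ`, then `I - ΦΔ` is
invertible and `fᵀ ΦΔ(I - ΦΔ)⁻¹ v ≤ ‖Φᵀ f‖₁ (∑_{k<N} τ^k) γ`. -/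
theorem stmt13 {p q : Type*} [Fintype p] [Fintype q] [DecidableEq p] [DecidableEq q]
    (Φ : Matrix p q ℝ) (Δ : Matrix q p ℝ) (f v : p → ℝ) (N : ℕ) (τ γ : ℝ)
    (hnil : (Φ * Δ) ^ (N + 1) = 0)
    (hτ : ‖Δ * Φ‖ ≤ τ)
    (hγ : ‖Δ.mulVec v‖ ≤ γ) :
    IsUnit (1 - Φ * Δ) ∧
    f ⬝ᵥ (Φ * Δ * (1 - Φ * Δ)⁻¹).mulVec v ≤
      (∑ i, |Φᵀ.mulVec f i|) * (∑ k ∈ Finset.range N, τ ^ k) * γ := by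
  have hτ0 : 0 ≤ τ := le_trans (norm_nonneg _) hτ
  have hγ0 : 0 ≤ γ := le_trans (norm_nonneg _) hγ
  set S : Matrix p p ℝ := ∑ i ∈ Finset.range (N + 1), (Φ * Δ) ^ i with hS
  have hright : (1 - Φ * Δ) * S = 1 := by
    rw [hS, mul_neg_geom_sum, hnil, sub_zero]
  have hunit : IsUnit (1 - Φ * Δ) := (Matrix.isUnit_iff_isUnit_det _).mpr (Matrix.isUnit_det_of_right_inverse hright)
  refine ⟨hunit, ?_⟩
  have hinv : (1 - Φ * Δ)⁻¹ = S := Matrix.inv_eq_right_inv hright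
  have hM : Φ * Δ * (1 - Φ * Δ)⁻¹ = ∑ k ∈ Finset.range N, (Φ * Δ) ^ (k + 1) := by
    rw [hinv, hS, Finset.mul_sum, Finset.sum_range_succ, ← pow_succ']
    rw [hnil, add_zero]
    exact Finset.sum_congr rfl fun k _ => (pow_succ' _ _).symm
  rw [hM]
  have hwnorm : ∀ k : ℕ, ‖((Δ * Φ) ^ k).mulVec (Δ.mulVec v)‖ ≤ τ ^ k * γ := by
    intro k
    induction k with
    | zero => simpa using hγ
    | succ n ih =>
      rw [pow_succ', ← Matrix.mulVec_mulVec]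
      calc ‖(Δ * Φ).mulVec (((Δ * Φ) ^ n).mulVec (Δ.mulVec v))‖
          ≤ ‖Δ * Φ‖ * ‖((Δ * Φ) ^ n).mulVec (Δ.mulVec v)‖ :=
            Matrix.linfty_opNorm_mulVec _ _
        _ ≤ τ * (τ ^ n * γ) := mul_le_mul hτ ih (norm_nonneg _) hτ0
        _ = τ ^ (n + 1) * γ := by ring
  have key : ∀ k, f ⬝ᵥ ((Φ * Δ) ^ (k + 1)).mulVec v ≤
      (∑ i, |Φᵀ.mulVec f i|) * (τ ^ k * γ) := by
    intro k
    rw [mul_pow_aux, ← Matrix.mulVec_mulVec,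
      Matrix.dotProduct_mulVec, ← Matrix.mulVec_transpose, ← Matrix.mulVec_mulVec]
    set w : q → ℝ := ((Δ * Φ) ^ k).mulVec (Δ.mulVec v) with hw
    calc Φᵀ.mulVec f ⬝ᵥ w = ∑ i, Φᵀ.mulVec f i * w i := rfl
      _ ≤ ∑ i, |Φᵀ.mulVec f i| * (τ ^ k * γ) := by
          apply Finset.sum_le_sum
          intro i _
          calc Φᵀ.mulVec f i * w i ≤ |Φᵀ.mulVec f i * w i| := le_abs_self _
            _ = |Φᵀ.mulVec f i| * |w i| := abs_mul _ _
            _ ≤ |Φᵀ.mulVec f i| * (τ ^ k * γ) := by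
                apply mul_le_mul_of_nonneg_left _ (abs_nonneg _)
                exact le_trans (norm_le_pi_norm w i) (hwnorm k)
      _ = (∑ i, |Φᵀ.mulVec f i|) * (τ ^ k * γ) := by rw [← Finset.sum_mul]
  have hdp : ∀ (g : ℕ → p → ℝ),
      f ⬝ᵥ (∑ k ∈ Finset.range N, g k) = ∑ k ∈ Finset.range N, f ⬝ᵥ g k := by
    intro g
    induction (Finset.range N) using Finset.cons_induction with
    | empty => simp
    | cons a s h ih => simp only [Finset.sum_cons, dotProduct_add, ih]
  calc f ⬝ᵥ (∑ k ∈ Finset.range N, (Φ * Δ) ^ (k + 1)).mulVec v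
      = ∑ k ∈ Finset.range N, f ⬝ᵥ ((Φ * Δ) ^ (k + 1)).mulVec v := by
        rw [show (∑ k ∈ Finset.range N, (Φ * Δ) ^ (k + 1)) *ᵥ v
            = ∑ k ∈ Finset.range N, ((Φ * Δ) ^ (k + 1)) *ᵥ v
          from map_sum (Matrix.mulVec.addMonoidHomLeft v) _ _, hdp]
    _ ≤ ∑ k ∈ Finset.range N, (∑ i, |Φᵀ.mulVec f i|) * (τ ^ k * γ) :=
        Finset.sum_le_sum fun k _ => key k
    _ = (∑ i, |Φᵀ.mulVec f i|) * (∑ k ∈ Finset.range N, τ ^ k) * γ := by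
        rw [← Finset.mul_sum, ← Finset.sum_mul, mul_assoc]
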